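/- Let π be a layout of G of width at most k, let j < j' ≤ m, set F = π_{≤ j} and e = π(j'). If d(F ∪ {e}) ≤ d(F), then the layout π' obtained from π by moving e forward to position j+1 (i.e., π' = π(1)⋯π(j), e, π(j+1)⋯π(j'−1), π(j'+1)⋯π(m)) also has width at most k. -/

import Mathlib

variable {V : Type*} [Fintype V] [DecidableEq V]

/-- `Vs F` is the set of endpoints of edges in `F`. -/
def Vs (F : Finset (Sym2 V)) : Finset V :=
  Finset.univ.filter (fun v => ∃ e ∈ F, v ∈ e)

/-- The set of endpoints of a single edge. -/
def eset (e : Sym2 V) : Finset V := Finset.univ.filter (fun v => v ∈ e)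

/-- `mids E F` is mid(F) = V(F) ∩ V(E \ F), relative to the edge set `E`. -/
def mids (E F : Finset (Sym2 V)) : Finset V := Vs F ∩ Vs (E \ F)

/-- `dd E F` is d(F) = |mid(F)|, relative to the edge set `E`. -/
def dd (E F : Finset (Sym2 V)) : ℕ := (mids E F).card

/-- A layout of the edge set `E`: a duplicate-free list enumerating `E`
(equivalently, a bijection {1,…,m} → E). -/
def IsLayout (E : Finset (Sym2 V)) (L : List (Sym2 V)) : Prop :=
  L.Nodup ∧ L.toFinset = E

/-- The (partial) layout `L` has width at most `k` w.r.t. the edge set `E`: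
every prefix `π_{≤ i}` satisfies d(π_{≤ i}) ≤ k. -/
def WidthLE (E : Finset (Sym2 V)) (L : List (Sym2 V)) (k : ℕ) : Prop :=
  ∀ i, dd E (L.take i).toFinset ≤ k

/-- The linearwidth of the edge set `E`: the minimum width of a layout of `E`. -/
noncomputable def lw (E : Finset (Sym2 V)) : ℕ :=
  sInf {k | ∃ L, IsLayout E L ∧ WidthLE E L k}

/-- The number of edges of `S` incident to `u`. -/
def degIn (S : Finset (Sym2 V)) (u : V) : ℕ := (S.filter (fun e => u ∈ e)).card

/-- `X` is a path decomposition of `G`, given as a list of bags. -/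
def IsPD (G : SimpleGraph V) (X : List (Finset V)) : Prop :=
  (∀ v : V, ∃ B ∈ X, v ∈ B) ∧
  (∀ e ∈ G.edgeSet, ∃ B ∈ X, eset e ⊆ B) ∧
  (∀ v : V, ∀ i j l : ℕ, i ≤ j → j ≤ l → l < X.length →
    v ∈ X.getD i ∅ → v ∈ X.getD l ∅ → v ∈ X.getD j ∅)

/-- The pathwidth of `G`: the minimum over path decompositions of (max bag size) − 1. -/
noncomputable def pw (G : SimpleGraph V) : ℕ :=
  sInf {k | ∃ X, IsPD G X ∧ ∀ B ∈ X, B.card ≤ k + 1}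

/-- The closure F* of `F` in `E`: all edges of `E` with both endpoints in `V(F)`. -/
def cl (E F : Finset (Sym2 V)) : Finset (Sym2 V) := E.filter (fun e => eset e ⊆ Vs F)

/-- A partial layout `S` is `k`-extendable: it is a prefix of some layout
of `E` of width at most `k`. -/
def Extendable (E : Finset (Sym2 V)) (k : ℕ) (S : List (Sym2 V)) : Prop :=
  ∃ L, IsLayout E L ∧ WidthLE E L k ∧ S <+: L


set_option linter.unusedSectionVars false in
lemma mem_mids {E F : Finset (Sym2 V)} {v : V} :
    v ∈ mids E F ↔ (∃ f ∈ F, v ∈ f) ∧ (∃ f ∈ E, f ∉ F ∧ v ∈ f) := by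
  simp [mids, Vs, and_assoc]

lemma card_le_of_union_inter {A B C D : Finset V} (h1 : A ∪ B ⊆ C ∪ D)
    (h2 : A ∩ B ⊆ C ∩ D) : A.card + B.card ≤ C.card + D.card := by
  have hA := Finset.card_union_add_card_inter A B
  have hC := Finset.card_union_add_card_inter C D
  have := Finset.card_le_card h1
  have := Finset.card_le_card h2
  omega

lemma dd_submod (E X P : Finset (Sym2 V)) (e : Sym2 V) (hPX : P ⊆ X) (hXE : X ⊆ E)
    (heE : e ∈ E) (heX : e ∉ X) :
    dd E (insert e X) + dd E P ≤ dd E X + dd E (insert e P) := by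
  apply card_le_of_union_inter
  · intro v hv
    simp only [Finset.mem_union, mem_mids] at hv ⊢
    rcases hv with ⟨⟨f, hfX, hvf⟩, ⟨g, hgE, hgX, hvg⟩⟩ | ⟨⟨f, hfP, hvf⟩, ⟨g, hgE, hgP, hvg⟩⟩
    · simp only [Finset.mem_insert] at hfX hgX
      push_neg at hgX
      rcases hfX with rfl | hfX
      · right
        exact ⟨⟨f, by simp, hvf⟩, ⟨g, hgE, by simp only [Finset.mem_insert, not_or]; exact ⟨hgX.1, fun h => hgX.2 (hPX h)⟩, hvg⟩⟩
      · left
        exact ⟨⟨f, hfX, hvf⟩, ⟨g, hgE, hgX.2, hvg⟩⟩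
    · by_cases hge : g = e
      · subst hge
        left
        exact ⟨⟨f, hPX hfP, hvf⟩, ⟨g, hgE, heX, hvg⟩⟩
      · right
        exact ⟨⟨f, by simp [hfP], hvf⟩, ⟨g, hgE, by simp [hgP, hge], hvg⟩⟩
  · intro v hv
    simp only [Finset.mem_inter, mem_mids] at hv ⊢
    obtain ⟨⟨⟨f, hfX, hvf⟩, ⟨g, hgE, hgX, hvg⟩⟩, ⟨⟨f', hfP, hvf'⟩, ⟨g', hgE', hgP, hvg'⟩⟩⟩ := hv
    simp only [Finset.mem_insert] at hgX
    push_neg at hgX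
    constructor
    · exact ⟨⟨f', hPX hfP, hvf'⟩, ⟨g, hgE, hgX.2, hvg⟩⟩
    · exact ⟨⟨f', by simp [hfP], hvf'⟩, ⟨g, hgE, by simp only [Finset.mem_insert, not_or]; exact ⟨hgX.1, fun h => hgX.2 (hPX h)⟩, hvg⟩⟩


/-- Moving an edge e with d(F ∪ {e}) ≤ d(F) forward to just after the prefix P
(with F = P.toFinset) preserves width at most k. -/
theorem stmt13 (E : Finset (Sym2 V)) (k : ℕ) (P Q R : List (Sym2 V)) (e : Sym2 V)
    (hL : IsLayout E (P ++ Q ++ e :: R))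
    (hw : WidthLE E (P ++ Q ++ e :: R) k)
    (hd : dd E (insert e P.toFinset) ≤ dd E P.toFinset) :
    WidthLE E (P ++ e :: (Q ++ R)) k := by
  obtain ⟨hnd0, hE0⟩ := hL
  have hL : (P ++ Q ++ e :: R).Nodup ∧ (P ++ Q ++ e :: R).toFinset = E := ⟨hnd0, hE0⟩
  have hw : ∀ i, dd E (((P ++ Q ++ e :: R).take i).toFinset) ≤ k := hw
  intro i
  set p := P.length with hp
  set q := Q.length with hq
  have heE : e ∈ E := by
    rw [← hL.2]; simp
  by_cases h1 : i ≤ p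
  · have : (P ++ e :: (Q ++ R)).take i = ((P ++ Q ++ e :: R).take i) := by
      rw [List.take_append, List.take_append,
        List.take_append]
      have h3 : i - P.length = 0 := by omega
      have h4 : i - (P.length + Q.length) = 0 := by omega
      simp [h3, h4]
    rw [this]; exact hw i
  · push_neg at h1
    by_cases h2 : i ≤ p + 1 + q
    · set t := i - p - 1 with ht
      have htq : t ≤ q := by omega
      have hnew : (P ++ e :: (Q ++ R)).take i = P ++ e :: Q.take t := by
        rw [List.take_append]
        have h3 : i - p = t + 1 := by omega
        rw [List.take_of_length_le (by omega), h3]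
        simp [List.take_append, Nat.sub_eq_zero_of_le (show t ≤ Q.length by omega)]
      have hold : (P ++ Q ++ e :: R).take (p + t) = P ++ Q.take t := by
        rw [List.take_append, List.take_append,
          List.take_of_length_le (by omega)]
        have h4 : p + t - p = t := by omega
        rw [h4, Nat.sub_eq_zero_of_le (by simp; omega)]
        simp
      set X := (P ++ Q.take t).toFinset with hX
      have hPX : P.toFinset ⊆ X := by
        intro x hx; simp only [hX, List.toFinset_append, Finset.mem_union]; exact Or.inl hx
      have hXE : X ⊆ E := by
        intro x hx
        rw [← hL.2]
        simp only [hX, List.mem_toFinset, List.mem_append] at hx ⊢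
        rcases hx with hx | hx
        · exact Or.inl (Or.inl hx)
        · exact Or.inl (Or.inr (List.mem_of_mem_take hx))
      have heX : e ∉ X := by
        have hnd := hL.1
        rw [List.append_assoc, List.nodup_append'] at hnd
        intro hx
        simp only [hX, List.mem_toFinset, List.mem_append] at hx
        rcases hx with hx | hx
        · exact hnd.2.2 hx (by simp)
        · have := List.mem_of_mem_take hx
          rcases (List.nodup_append'.mp hnd.2.1) with ⟨_, _, hdisj⟩
          exact hdisj this (by simp)
      have hXk : dd E X ≤ k := by
        have := hw (p + t); rwa [hold] at this
      have hsub := dd_submod E X P.toFinset e hPX hXE heE heX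
      have hfin : ((P ++ e :: Q.take t).toFinset) = insert e X := by
        simp [hX, List.toFinset_append, Finset.union_insert]
      rw [hnew, hfin]
      omega
    · push_neg at h2
      have hnew : (P ++ e :: (Q ++ R)).take i = P ++ e :: (Q ++ R.take (i - p - 1 - q)) := by
        rw [List.take_append, List.take_of_length_le (by omega)]
        have h3 : i - p = (i - p - 1) + 1 := by omega
        rw [h3]
        rw [List.take_succ_cons]
        rw [List.take_append, List.take_of_length_le (by omega)]
        have h5 : i - p - 1 + 1 - 1 - q = i - p - 1 - q := by omega
        rw [h5, ← hq]
      have hold : (P ++ Q ++ e :: R).take i = P ++ Q ++ e :: R.take (i - p - 1 - q) := by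
        rw [List.take_append, List.take_of_length_le (by simp; omega)]
        have h3 : i - (P ++ Q).length = (i - p - 1 - q) + 1 := by simp; omega
        rw [h3]
        simp
      have hfeq : ((P ++ e :: (Q ++ R.take (i - p - 1 - q))).toFinset)
          = ((P ++ Q ++ e :: R.take (i - p - 1 - q)).toFinset) := by
        simp [List.toFinset_append, Finset.union_insert, Finset.union_assoc]
      rw [hnew, hfeq, ← hold]
      exact hw i
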